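/- arXiv:2402.04462 — 4 statements merged into one kernel-verified Lean document; each statement's English description precedes it below -/
import Mathlib

section
/- Let u, x : Fin m → K satisfy F(u) = 0 and F(x) = 0. Then for all s, t ∈ K one has F(s•u + t•x) = s*t*( s*(∇F(u)·x) + t*(∇F(x)·u) ). (This is the cubic-polarization identity underlying the analysis of the intersection of the cubic X = {F=0} with the line through [u] and [x]: X cuts out on that line the divisor [u] + [x] + [y] with third point y determined by the two directional derivatives.) -/
open MvPolynomial

section Aux

variable {K : Type*} [CommRing K] {m : ℕ}

private lemma deriv_sum_triple' (a b : Fin m → K) (i j k : Fin m) :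
    ∑ l, MvPolynomial.eval a (MvPolynomial.pderiv l (X i * (X j * X k) : MvPolynomial (Fin m) K)) * b l
      = b i * (a j * a k) + b j * (a i * a k) + b k * (a i * a j) := by
  simp [pderiv_mul, Pi.single_apply, mul_add, add_mul, Finset.sum_add_distrib,
    apply_ite (MvPolynomial.eval a), ite_mul, Finset.sum_ite_eq', mul_comm, mul_left_comm]
  ring

private lemma monomial_three' (d : Fin m →₀ ℕ) (hd : (d.sum fun _ e => e) = 3) (r : K) :
    ∃ i j k : Fin m, monomial d r = C r * (X i * (X j * X k)) := by
  classical
  have hc : Multiset.card d.toMultiset = 3 := by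
    rw [Finsupp.card_toMultiset]; exact hd
  obtain ⟨i, j, k, hijk⟩ := Multiset.card_eq_three.mp hc
  refine ⟨i, j, k, ?_⟩
  have hdd : d = Finsupp.single i 1 + (Finsupp.single j 1 + Finsupp.single k 1) := by
    have h := d.toMultiset_toFinsupp
    rw [hijk] at h
    rw [← h]
    simp only [Multiset.insert_eq_cons, ← Multiset.singleton_add, Multiset.toFinsupp_add,
      Multiset.toFinsupp_singleton]
  rw [hdd, monomial_single_add, monomial_single_add,
    show (monomial (Finsupp.single k 1)) r = C r * X k by rw [X, C_mul_monomial, mul_one]]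
  ring

private lemma expand_monomial' (a b : Fin m → K) (s t : K) (d : Fin m →₀ ℕ) (r : K)
    (hd : (d.sum fun _ e => e) = 3) :
    MvPolynomial.eval (s • a + t • b) (monomial d r) =
      s^3 * MvPolynomial.eval a (monomial d r)
      + s^2*t * (∑ l, MvPolynomial.eval a (MvPolynomial.pderiv l (monomial d r)) * b l)
      + s*t^2 * (∑ l, MvPolynomial.eval b (MvPolynomial.pderiv l (monomial d r)) * a l)
      + t^3 * MvPolynomial.eval b (monomial d r) := by
  obtain ⟨i, j, k, hmon⟩ := monomial_three' d hd r
  rw [hmon]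
  have h2 : ∀ v w : Fin m → K,
      ∑ l, MvPolynomial.eval v (MvPolynomial.pderiv l (C r * (X i * (X j * X k)))) * w l
        = r * (w i * (v j * v k) + w j * (v i * v k) + w k * (v i * v j)) := by
    intro v w
    simp only [pderiv_C_mul, eval_mul, eval_C, mul_assoc, ← Finset.mul_sum]
    rw [deriv_sum_triple']
  rw [h2, h2]
  simp only [eval_mul, eval_C, eval_X, Pi.add_apply, Pi.smul_apply, smul_eq_mul]
  ring

private lemma cubic_expand' (F : MvPolynomial (Fin m) K) (hF : F.IsHomogeneous 3)
    (a b : Fin m → K) (s t : K) :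
    MvPolynomial.eval (s • a + t • b) F =
      s^3 * MvPolynomial.eval a F
      + s^2*t * (∑ i, MvPolynomial.eval a (MvPolynomial.pderiv i F) * b i)
      + s*t^2 * (∑ i, MvPolynomial.eval b (MvPolynomial.pderiv i F) * a i)
      + t^3 * MvPolynomial.eval b F := by
  have e1 : ∀ v : Fin m → K,
      ∑ d ∈ F.support, MvPolynomial.eval v (monomial d (coeff d F)) = MvPolynomial.eval v F := by
    intro v; rw [← map_sum, ← F.as_sum]
  have e2 : ∀ v w : Fin m → K,
      ∑ d ∈ F.support, ∑ i, MvPolynomial.eval v (MvPolynomial.pderiv i (monomial d (coeff d F))) * w i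
        = ∑ i, MvPolynomial.eval v (MvPolynomial.pderiv i F) * w i := by
    intro v w
    rw [Finset.sum_comm]
    refine Finset.sum_congr rfl fun i _ => ?_
    rw [← Finset.sum_mul, ← map_sum, ← map_sum, ← F.as_sum]
  calc MvPolynomial.eval (s • a + t • b) F
      = ∑ d ∈ F.support, MvPolynomial.eval (s • a + t • b) (monomial d (coeff d F)) := by
        rw [← map_sum, ← F.as_sum]
    _ = ∑ d ∈ F.support,
          (s^3 * MvPolynomial.eval a (monomial d (coeff d F))
          + s^2*t * (∑ l, MvPolynomial.eval a (MvPolynomial.pderiv l (monomial d (coeff d F))) * b l)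
          + s*t^2 * (∑ l, MvPolynomial.eval b (MvPolynomial.pderiv l (monomial d (coeff d F))) * a l)
          + t^3 * MvPolynomial.eval b (monomial d (coeff d F))) := by
        refine Finset.sum_congr rfl fun d hd => ?_
        refine expand_monomial' a b s t d _ ?_
        have h := hF (MvPolynomial.mem_support_iff.mp hd)
        simpa [Finsupp.weight, Finsupp.linearCombination, Finsupp.sum] using h
    _ = _ := by
        simp only [Finset.sum_add_distrib, ← Finset.mul_sum, e1, e2]

end Aux

/-- Cubic polarization identity: if `F` is a homogeneous cubic with `F(u) = F(x) = 0`,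
then `F(s•u + t•x) = s*t*(s*(∇F(u)·x) + t*(∇F(x)·u))`. -/
theorem cubic_polarization {K : Type*} [Field K] [CharZero K] {m : ℕ} (hm : 1 ≤ m)
    (F : MvPolynomial (Fin m) K) (hF : F.IsHomogeneous 3)
    (u x : Fin m → K)
    (hu : MvPolynomial.eval u F = 0) (hx : MvPolynomial.eval x F = 0) :
    ∀ s t : K,
      MvPolynomial.eval (s • u + t • x) F =
        s * t * (s * (∑ i, MvPolynomial.eval u (MvPolynomial.pderiv i F) * x i)
          + t * (∑ i, MvPolynomial.eval x (MvPolynomial.pderiv i F) * u i)) := by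
  intro s t
  rw [cubic_expand' F hF u x s t, hu, hx]
  ring
end

section
/- Let u, x : Fin m → K satisfy F(u) = 0 and F(x) = 0. Then (∇F(u)·x = 0 and ∇F(x)·u = 0) holds if and only if F(s•u + t•x) = 0 for all s, t ∈ K. (Lemma 3.4 of the paper in cone coordinates: for a cubic hypersurface X = {F = 0} and a point [u] ∈ X, the intersection S_u ∩ S_u* of the hyperplane section S_u = 𝕋_{[u]}X ∩ X with the locus S_u* = { [x] ∈ X : [u] ∈ 𝕋_{[x]}X } equals the union C_u of lines on X through [u]; equivalently, a line bitangent to a cubic hypersurface is contained in it.) -/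
open Polynomial MvPolynomial

-- eval of scaled vector for homogeneous cubic
lemma eval_smul_cube {K : Type*} [CommRing K] {m : ℕ} {F : MvPolynomial (Fin m) K}
    (hF : F.IsHomogeneous 3) (c : K) (v : Fin m → K) :
    MvPolynomial.eval (c • v) F = c ^ 3 * MvPolynomial.eval v F := by
  rw [MvPolynomial.eval_eq, MvPolynomial.eval_eq, Finset.mul_sum]
  refine Finset.sum_congr rfl fun d hd => ?_
  have h3 : ∑ i ∈ d.support, d i = 3 := by
    have := hF (MvPolynomial.mem_support_iff.mp hd)
    simpa [Finsupp.weight_apply, Finsupp.sum] using this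
  rw [← h3]
  simp only [Pi.smul_apply, smul_eq_mul, mul_pow, Finset.prod_mul_distrib,
    Finset.prod_pow_eq_pow_sum]
  ring

-- chain rule for derivative of aeval
lemma derivative_aeval {K : Type*} [CommRing K] {m : ℕ} (φ : Fin m → Polynomial K)
    (F : MvPolynomial (Fin m) K) :
    Polynomial.derivative (MvPolynomial.aeval φ F) =
      ∑ i, MvPolynomial.aeval φ (MvPolynomial.pderiv i F) * Polynomial.derivative (φ i) := by
  induction F using MvPolynomial.induction_on with
  | C a => simp
  | add p q hp hq => simp [hp, hq, add_mul, Finset.sum_add_distrib]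
  | mul_X p j hp =>
    simp only [map_mul, MvPolynomial.aeval_X, Polynomial.derivative_mul, hp,
      MvPolynomial.pderiv_mul, MvPolynomial.pderiv_X, map_add, add_mul,
      Finset.sum_add_distrib, Finset.sum_mul]
    refine congrArg₂ (· + ·) ?_ ?_
    · exact Finset.sum_congr rfl fun i _ => by ring
    · rw [Finset.sum_eq_single j]
      · simp
      · intro i _ hij
        simp [Pi.single_eq_of_ne (Ne.symm hij)]
      · simp

/-- the polynomial `T ↦ F(v + T w)` -/
noncomputable def linePoly {K : Type*} [CommRing K] {m : ℕ} (v w : Fin m → K)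
    (F : MvPolynomial (Fin m) K) : Polynomial K :=
  MvPolynomial.aeval (fun i => Polynomial.C (v i) + Polynomial.C (w i) * Polynomial.X) F

lemma linePoly_eval {K : Type*} [CommRing K] {m : ℕ} (v w : Fin m → K)
    (F : MvPolynomial (Fin m) K) (t : K) :
    (linePoly v w F).eval t = MvPolynomial.eval (v + t • w) F := by
  induction F using MvPolynomial.induction_on with
  | C a => simp [linePoly]
  | add p q hp hq => simp [linePoly, map_add, Polynomial.eval_add] at hp hq ⊢; rw [hp, hq]
  | mul_X p j hp =>
    simp only [linePoly, map_mul, MvPolynomial.aeval_X, Polynomial.eval_mul] at hp ⊢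
    rw [hp, MvPolynomial.eval_X]
    simp only [Polynomial.eval_add, Polynomial.eval_mul, Polynomial.eval_C, Polynomial.eval_X,
      Pi.add_apply, Pi.smul_apply, smul_eq_mul]
    ring

lemma linePoly_coeff_zero {K : Type*} [CommRing K] {m : ℕ} (v w : Fin m → K)
    (F : MvPolynomial (Fin m) K) :
    (linePoly v w F).coeff 0 = MvPolynomial.eval v F := by
  rw [Polynomial.coeff_zero_eq_eval_zero, linePoly_eval]
  simp

lemma linePoly_coeff_one {K : Type*} [CommRing K] {m : ℕ} (v w : Fin m → K)
    (F : MvPolynomial (Fin m) K) :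
    (linePoly v w F).coeff 1 =
      ∑ i, MvPolynomial.eval v (MvPolynomial.pderiv i F) * w i := by
  have h : (linePoly v w F).coeff 1
      = (Polynomial.derivative (linePoly v w F)).coeff 0 := by
    rw [Polynomial.coeff_derivative]; ring
  rw [h, Polynomial.coeff_zero_eq_eval_zero, linePoly, derivative_aeval]
  have : ∀ i : Fin m, Polynomial.derivative
      (Polynomial.C (v i) + Polynomial.C (w i) * Polynomial.X) = Polynomial.C (w i) := by
    intro i; simp
  simp only [this, Polynomial.eval_finset_sum, Polynomial.eval_mul, Polynomial.eval_C]
  refine Finset.sum_congr rfl fun i _ => ?_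
  congr 1
  have := linePoly_eval v w (MvPolynomial.pderiv i F) 0
  simpa [linePoly] using this

lemma linePoly_natDegree_le {K : Type*} [CommRing K] {m : ℕ} (v w : Fin m → K)
    {F : MvPolynomial (Fin m) K} (hF : F.IsHomogeneous 3) :
    (linePoly v w F).natDegree ≤ 3 := by
  have := MvPolynomial.aeval_natDegree_le (n := 1) F hF.totalDegree_le
    (fun i => Polynomial.C (v i) + Polynomial.C (w i) * Polynomial.X)
    (fun i => (Polynomial.natDegree_add_le _ _).trans (by
      simp only [Polynomial.natDegree_C, max_le_iff]
      exact ⟨Nat.zero_le 1, (Polynomial.natDegree_C_mul_le _ _).trans Polynomial.natDegree_X_le⟩))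
  rw [linePoly]
  simpa using this

lemma linePoly_reflect {K : Type*} [Field K] [CharZero K] {m : ℕ} (v w : Fin m → K)
    {F : MvPolynomial (Fin m) K} (hF : F.IsHomogeneous 3) :
    linePoly v w F = Polynomial.reflect 3 (linePoly w v F) := by
  have key : ∀ t : K, t ≠ 0 →
      (linePoly v w F).eval t = (Polynomial.reflect 3 (linePoly w v F)).eval t := by
    intro t ht
    haveI : Invertible (t⁻¹) := invertibleOfNonzero (inv_ne_zero ht)
    have h1 := Polynomial.eval₂_reflect_mul_pow (RingHom.id K) (t⁻¹) 3 (linePoly w v F)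
      (linePoly_natDegree_le w v hF)
    rw [invOf_eq_inv, inv_inv] at h1
    have h2 : (Polynomial.reflect 3 (linePoly w v F)).eval t * (t⁻¹) ^ 3
        = (linePoly w v F).eval t⁻¹ := h1
    have h3 : (Polynomial.reflect 3 (linePoly w v F)).eval t
        = (linePoly w v F).eval t⁻¹ * t ^ 3 := by
      field_simp at h2
      rw [one_div] at h2
      exact h2.trans (mul_comm _ _)
    rw [h3, linePoly_eval, linePoly_eval]
    have h4 : v + t • w = t • (w + t⁻¹ • v) := by
      funext i
      simp only [Pi.add_apply, Pi.smul_apply, smul_eq_mul]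
      field_simp
      ring
    rw [h4, eval_smul_cube hF]
    ring
  have hsub : Set.Infinite
      {t : K | ((linePoly v w F) - Polynomial.reflect 3 (linePoly w v F)).IsRoot t} := by
    apply Set.Infinite.mono _ ((Set.finite_singleton (0 : K)).infinite_compl)
    intro t ht
    have ht' : t ≠ 0 := ht
    simp [Polynomial.IsRoot, key t ht']
  have := Polynomial.eq_zero_of_infinite_isRoot _ hsub
  exact sub_eq_zero.mp this

/-- A line bitangent to a cubic hypersurface is contained in it: for `F(u) = F(x) = 0`,
`∇F(u)·x = 0` and `∇F(x)·u = 0` hold iff `F` vanishes on the plane spanned by `u, x`. -/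
theorem bitangent_line_in_cubic {K : Type*} [Field K] [CharZero K] {m : ℕ} (hm : 1 ≤ m)
    (F : MvPolynomial (Fin m) K) (hF : F.IsHomogeneous 3)
    (u x : Fin m → K)
    (hu : MvPolynomial.eval u F = 0) (hx : MvPolynomial.eval x F = 0) :
    ((∑ i, MvPolynomial.eval u (MvPolynomial.pderiv i F) * x i) = 0 ∧
      (∑ i, MvPolynomial.eval x (MvPolynomial.pderiv i F) * u i) = 0) ↔
      ∀ s t : K, MvPolynomial.eval (s • u + t • x) F = 0 := by
  set q := linePoly u x F with hqdef
  have hq0 : q.coeff 0 = 0 := by rw [hqdef, linePoly_coeff_zero]; exact hu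
  have hq1 : q.coeff 1 = ∑ i, MvPolynomial.eval u (MvPolynomial.pderiv i F) * x i :=
    linePoly_coeff_one u x F
  have hrefl : q = Polynomial.reflect 3 (linePoly x u F) := linePoly_reflect u x hF
  have hq2 : q.coeff 2 = ∑ i, MvPolynomial.eval x (MvPolynomial.pderiv i F) * u i := by
    rw [hrefl, Polynomial.coeff_reflect, Polynomial.revAt_le (by norm_num)]
    exact linePoly_coeff_one x u F
  have hq3 : q.coeff 3 = 0 := by
    rw [hrefl, Polynomial.coeff_reflect, Polynomial.revAt_le (by norm_num)]
    simpa using (linePoly_coeff_zero x u F).trans hx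
  have hdeg : q.natDegree ≤ 3 := linePoly_natDegree_le u x hF
  constructor
  · rintro ⟨hA, hB⟩ s t
    have hqz : q = 0 := by
      ext n
      simp only [Polynomial.coeff_zero]
      rcases lt_or_ge n 4 with h | h
      · interval_cases n
        · exact hq0
        · exact hq1.trans hA
        · exact hq2.trans hB
        · exact hq3
      · exact Polynomial.coeff_eq_zero_of_natDegree_lt (lt_of_le_of_lt hdeg (by omega))
    rcases eq_or_ne s 0 with hs | hs
    · have : s • u + t • x = t • x := by rw [hs, zero_smul, zero_add]
      rw [this, eval_smul_cube hF, hx, mul_zero]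
    · have h4 : s • u + t • x = s • (u + (t / s) • x) := by
        funext i
        simp only [Pi.add_apply, Pi.smul_apply, smul_eq_mul]
        field_simp
      rw [h4, eval_smul_cube hF, ← linePoly_eval, ← hqdef, hqz]
      simp
  · intro h
    have hqz : q = 0 := by
      apply Polynomial.eq_zero_of_infinite_isRoot
      have : {t : K | q.IsRoot t} = Set.univ := by
        ext t
        simp only [Set.mem_setOf_eq, Set.mem_univ, iff_true, Polynomial.IsRoot]
        rw [hqdef, linePoly_eval]
        have := h 1 t
        rwa [one_smul] at this
      rw [this]
      exact Set.infinite_univ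
    constructor
    · rw [← hq1, hqz, Polynomial.coeff_zero]
    · rw [← hq2, hqz, Polynomial.coeff_zero]
end

section
/- Let u, x : Fin m → K be linearly independent over K with F(u) = 0 and F(x) = 0, and assume the line through [u] and [x] is not contained in the cubic X = {F = 0}, i.e. there exist s, t ∈ K with F(s•u + t•x) ≠ 0. Set y := (∇F(x)·u) • u − (∇F(u)·x) • x. Then: (a) there exists c ∈ K, c ≠ 0, with y = c • x if and only if ∇F(x)·u = 0; and (b) there exists c ∈ K, c ≠ 0, with y = c • u if and only if ∇F(u)·x = 0. (Lemma 3.5 and Corollary 3.6(a) of the paper: τ_u fixes [x] exactly when [u] ∈ 𝕋_{[x]}X, and τ_u contracts the hyperplane section S_u = 𝕋_{[u]}X ∩ X minus C_u to the point [u].) -/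
open Polynomial MvPolynomial

noncomputable section AuxTau

variable {K : Type*} [Field K] {m : ℕ}

def lineSub (v w : Fin m → K) (F : MvPolynomial (Fin m) K) : Polynomial K :=
  MvPolynomial.aeval (fun i => Polynomial.C (v i) + Polynomial.C (w i) * Polynomial.X) F

lemma lineSub_eval (v w : Fin m → K) (F : MvPolynomial (Fin m) K) (t : K) :
    (lineSub v w F).eval t = MvPolynomial.eval (v + t • w) F := by
  unfold lineSub
  rw [MvPolynomial.aeval_def]
  have h := MvPolynomial.eval₂_comp_left (Polynomial.evalRingHom t)
    (algebraMap K (Polynomial K)) (fun i => Polynomial.C (v i) + Polynomial.C (w i) * Polynomial.X) F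
  simp only [coe_evalRingHom] at h
  rw [h]
  have h2 : (Polynomial.evalRingHom t).comp (algebraMap K (Polynomial K)) = RingHom.id K := by
    ext a; simp
  have h3 : (Polynomial.eval t ∘ fun i => Polynomial.C (v i) + Polynomial.C (w i) * Polynomial.X)
      = v + t • w := by
    funext i
    simp only [Function.comp_apply, Polynomial.eval_add, Polynomial.eval_C, Polynomial.eval_mul, Polynomial.eval_X,
      Pi.add_apply, Pi.smul_apply, smul_eq_mul]
    ring
  rw [h2, h3, MvPolynomial.eval₂_id]

lemma lineSub_chain (v w : Fin m → K) (F : MvPolynomial (Fin m) K) :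
    Polynomial.derivative (lineSub v w F) =
      ∑ i, lineSub v w (MvPolynomial.pderiv i F) * Polynomial.C (w i) := by
  unfold lineSub
  set g : Fin m → Polynomial K := fun i => Polynomial.C (v i) + Polynomial.C (w i) * Polynomial.X
    with hg
  induction F using MvPolynomial.induction_on with
  | C a => simp
  | add p q hp hq => simp [hp, hq, Finset.sum_add_distrib, add_mul]
  | mul_X p j ih =>
      have hdg : ∀ i, Polynomial.derivative (g i) = Polynomial.C (w i) := by
        intro i; simp [hg]
      have step : ∀ i, MvPolynomial.aeval g (MvPolynomial.pderiv i (p * MvPolynomial.X j))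
            * Polynomial.C (w i)
          = MvPolynomial.aeval g (MvPolynomial.pderiv i p) * Polynomial.C (w i) * g j
            + (if i = j then MvPolynomial.aeval g p * Polynomial.C (w j) else 0) := by
        intro i
        rw [MvPolynomial.pderiv_mul]
        by_cases h : i = j
        · subst h
          simp only [MvPolynomial.pderiv_X_self, mul_one, eq_self_iff_true, if_true, map_add,
            map_mul, MvPolynomial.aeval_X]
          ring
        · rw [MvPolynomial.pderiv_X_of_ne (Ne.symm h)]
          simp only [mul_zero, add_zero, if_neg h, map_mul, MvPolynomial.aeval_X]
          ring
      rw [map_mul, MvPolynomial.aeval_X, derivative_mul, ih, hdg]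
      rw [Finset.sum_congr rfl fun i _ => step i]
      rw [Finset.sum_add_distrib, Finset.sum_ite_eq' Finset.univ j,
        if_pos (Finset.mem_univ j), ← Finset.sum_mul]


lemma lineSub_coeff_zero (v w : Fin m → K) (F : MvPolynomial (Fin m) K) :
    (lineSub v w F).coeff 0 = MvPolynomial.eval v F := by
  rw [Polynomial.coeff_zero_eq_eval_zero, lineSub_eval]
  simp

lemma lineSub_coeff_one (v w : Fin m → K) (F : MvPolynomial (Fin m) K) :
    (lineSub v w F).coeff 1 = ∑ i, MvPolynomial.eval v (MvPolynomial.pderiv i F) * w i := by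
  have h : (lineSub v w F).coeff 1
      = (Polynomial.derivative (lineSub v w F)).coeff 0 := by
    rw [Polynomial.coeff_derivative]
    simp
  rw [h, lineSub_chain, Polynomial.finset_sum_coeff]
  refine Finset.sum_congr rfl fun i _ => ?_
  rw [Polynomial.coeff_mul_C, lineSub_coeff_zero]

lemma lineSub_natDegree_le (v w : Fin m → K) {F : MvPolynomial (Fin m) K}
    (hF : F.IsHomogeneous 3) : (lineSub v w F).natDegree ≤ 3 := by
  have hg : ∀ i, (Polynomial.C (v i) + Polynomial.C (w i) * Polynomial.X).natDegree ≤ 1 := by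
    intro i
    apply Polynomial.natDegree_add_le_of_degree_le
    · simp
    · apply (Polynomial.natDegree_C_mul_le _ _).trans
      simp
  have h := MvPolynomial.aeval_natDegree_le (n := 1) F hF.totalDegree_le
    (fun i => Polynomial.C (v i) + Polynomial.C (w i) * Polynomial.X) hg
  simpa [lineSub] using h

lemma homog_eval_smul {n : ℕ} {F : MvPolynomial (Fin m) K} (hF : F.IsHomogeneous n)
    (s : K) (v : Fin m → K) :
    MvPolynomial.eval (s • v) F = s ^ n * MvPolynomial.eval v F := by
  rw [MvPolynomial.eval_eq, MvPolynomial.eval_eq, Finset.mul_sum]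
  refine Finset.sum_congr rfl fun d hd => ?_
  have hdeg : (∑ i ∈ d.support, d i) = n := by
    have h := hF (MvPolynomial.mem_support_iff.mp hd)
    simp_rw [← h, Finsupp.weight_apply, Pi.one_apply, smul_eq_mul, mul_one, Finsupp.sum]
  have hprod : (∏ i ∈ d.support, (s • v) i ^ d i)
      = s ^ n * ∏ i ∈ d.support, v i ^ d i := by
    simp only [Pi.smul_apply, smul_eq_mul, mul_pow]
    rw [Finset.prod_mul_distrib, Finset.prod_pow_eq_pow_sum, hdeg]
  rw [hprod]
  ring


lemma key_vanish {F : MvPolynomial (Fin m) K} [CharZero K] (hF : F.IsHomogeneous 3)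
    (u x : Fin m → K)
    (hu : MvPolynomial.eval u F = 0) (hx : MvPolynomial.eval x F = 0)
    (hB : (∑ i, MvPolynomial.eval u (MvPolynomial.pderiv i F) * x i) = 0)
    (hA : (∑ i, MvPolynomial.eval x (MvPolynomial.pderiv i F) * u i) = 0) :
    ∀ s t : K, MvPolynomial.eval (s • u + t • x) F = 0 := by
  set P := lineSub u x F with hP
  set R := lineSub x u F with hR
  have hP0 : P.coeff 0 = 0 := by rw [hP, lineSub_coeff_zero, hu]
  have hP1 : P.coeff 1 = 0 := by rw [hP, lineSub_coeff_one, hB]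
  have hR0 : R.coeff 0 = 0 := by rw [hR, lineSub_coeff_zero, hx]
  have hR1 : R.coeff 1 = 0 := by rw [hR, lineSub_coeff_one, hA]
  have hPdeg : P.natDegree ≤ 3 := lineSub_natDegree_le u x hF
  have hRdeg : R.natDegree ≤ 3 := lineSub_natDegree_le x u hF
  have hPeval : ∀ t : K, P.eval t = P.coeff 2 * t ^ 2 + P.coeff 3 * t ^ 3 := by
    intro t
    rw [Polynomial.eval_eq_sum_range' (lt_of_le_of_lt hPdeg (by norm_num : (3:ℕ) < 4))]
    rw [Finset.sum_range_succ, Finset.sum_range_succ, Finset.sum_range_succ,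
      Finset.sum_range_succ, Finset.sum_range_zero, hP0, hP1]
    ring
  have hReval : ∀ t : K, R.eval t = R.coeff 2 * t ^ 2 + R.coeff 3 * t ^ 3 := by
    intro t
    rw [Polynomial.eval_eq_sum_range' (lt_of_le_of_lt hRdeg (by norm_num : (3:ℕ) < 4))]
    rw [Finset.sum_range_succ, Finset.sum_range_succ, Finset.sum_range_succ,
      Finset.sum_range_succ, Finset.sum_range_zero, hR0, hR1]
    ring
  -- the relation between P and R coming from homogeneity
  have hrel : ∀ t : K, t ≠ 0 →
      P.coeff 2 * t ^ 2 + P.coeff 3 * t ^ 3 = R.coeff 2 * t + R.coeff 3 := by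
    intro t ht
    have h1 : u + t • x = t • (x + t⁻¹ • u) := by
      rw [smul_add, smul_smul, mul_inv_cancel₀ ht, one_smul, add_comm]
    have h2 : P.eval t = t ^ 3 * R.eval t⁻¹ := by
      rw [hP, hR, lineSub_eval, lineSub_eval, h1, homog_eval_smul hF]
    rw [hPeval, hReval] at h2
    rw [h2]
    field_simp
  -- turn it into a polynomial identity
  set Q : Polynomial K := Polynomial.C (P.coeff 2) * Polynomial.X ^ 2
      + Polynomial.C (P.coeff 3) * Polynomial.X ^ 3
      - (Polynomial.C (R.coeff 2) * Polynomial.X + Polynomial.C (R.coeff 3)) with hQ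
  have hQroot : ∀ t : K, t ≠ 0 → Q.IsRoot t := by
    intro t ht
    simp only [hQ, Polynomial.IsRoot, Polynomial.eval_sub, Polynomial.eval_add,
      Polynomial.eval_mul, Polynomial.eval_pow, Polynomial.eval_C, Polynomial.eval_X]
    rw [sub_eq_zero]
    exact hrel t ht
  have hQ0 : Q = 0 := by
    apply Polynomial.eq_zero_of_infinite_isRoot
    apply Set.Infinite.mono (s := ({0}ᶜ : Set K))
    · intro t ht
      exact hQroot t ht
    · exact Set.Finite.infinite_compl (Set.finite_singleton 0)
  have hc2 : P.coeff 2 = 0 := by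
    have := congrArg (fun q => Polynomial.coeff q 2) hQ0
    simpa [hQ, Polynomial.coeff_X, Polynomial.coeff_one] using this
  have hc3 : P.coeff 3 = 0 := by
    have := congrArg (fun q => Polynomial.coeff q 3) hQ0
    simpa [hQ, Polynomial.coeff_X, Polynomial.coeff_one] using this
  have hPz : ∀ t : K, MvPolynomial.eval (u + t • x) F = 0 := by
    intro t
    rw [← lineSub_eval, ← hP, hPeval, hc2, hc3]
    ring
  intro s t
  by_cases hs : s = 0
  · subst hs
    rw [zero_smul, zero_add]
    rw [homog_eval_smul hF, hx, mul_zero]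
  · have h1 : s • u + t • x = s • (u + (s⁻¹ * t) • x) := by
      rw [smul_add, smul_smul, ← mul_assoc, mul_inv_cancel₀ hs, one_mul]
    rw [h1, homog_eval_smul hF, hPz, mul_zero]

end AuxTau


/-- Fixed points and contraction of `τ_u`: with `y := (∇F(x)·u) • u − (∇F(u)·x) • x`,
(a) `y` is a nonzero multiple of `x` iff `∇F(x)·u = 0`, and
(b) `y` is a nonzero multiple of `u` iff `∇F(u)·x = 0`,
provided `u, x` are linearly independent and the line through them is not in the cubic. -/
theorem tau_u_fixed_points {K : Type*} [Field K] [CharZero K] {m : ℕ} (hm : 1 ≤ m)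
    (F : MvPolynomial (Fin m) K) (hF : F.IsHomogeneous 3)
    (u x : Fin m → K)
    (hind : LinearIndependent K ![u, x])
    (hu : MvPolynomial.eval u F = 0) (hx : MvPolynomial.eval x F = 0)
    (hline : ∃ s t : K, MvPolynomial.eval (s • u + t • x) F ≠ 0) :
    ((∃ c : K, c ≠ 0 ∧
        (∑ i, MvPolynomial.eval x (MvPolynomial.pderiv i F) * u i) • u -
          (∑ i, MvPolynomial.eval u (MvPolynomial.pderiv i F) * x i) • x = c • x) ↔
      (∑ i, MvPolynomial.eval x (MvPolynomial.pderiv i F) * u i) = 0) ∧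
    ((∃ c : K, c ≠ 0 ∧
        (∑ i, MvPolynomial.eval x (MvPolynomial.pderiv i F) * u i) • u -
          (∑ i, MvPolynomial.eval u (MvPolynomial.pderiv i F) * x i) • x = c • u) ↔
      (∑ i, MvPolynomial.eval u (MvPolynomial.pderiv i F) * x i) = 0) := by
  set A : K := ∑ i, MvPolynomial.eval x (MvPolynomial.pderiv i F) * u i with hA
  set B : K := ∑ i, MvPolynomial.eval u (MvPolynomial.pderiv i F) * x i with hB
  have hli : ∀ a b : K, a • u + b • x = 0 → a = 0 ∧ b = 0 := by
    intro a b hab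
    have hsum : ∑ i : Fin 2, ![a, b] i • ![u, x] i = 0 := by
      simpa [Fin.sum_univ_two] using hab
    have h := Fintype.linearIndependent_iff.mp hind ![a, b] hsum
    exact ⟨h 0, h 1⟩
  constructor
  · constructor
    · rintro ⟨c, hc, heq⟩
      have h0 : A • u + (-B - c) • x = 0 := by
        have : A • u + (-B - c) • x = (A • u - B • x) - c • x := by module
        rw [this, heq, sub_self]
      exact (hli A (-B - c) h0).1
    · intro hA0
      have hBne : B ≠ 0 := by
        intro hB0
        obtain ⟨s, t, hst⟩ := hline
        exact hst (key_vanish hF u x hu hx hB0 hA0 s t)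
      refine ⟨-B, neg_ne_zero.mpr hBne, ?_⟩
      rw [hA0, zero_smul, zero_sub, ← neg_smul]
  · constructor
    · rintro ⟨c, hc, heq⟩
      have h0 : (A - c) • u + (-B) • x = 0 := by
        have : (A - c) • u + (-B) • x = (A • u - B • x) - c • u := by module
        rw [this, heq, sub_self]
      have := (hli (A - c) (-B) h0).2
      simpa using this
    · intro hB0
      have hAne : A ≠ 0 := by
        intro hA0
        obtain ⟨s, t, hst⟩ := hline
        exact hst (key_vanish hF u x hu hx hB0 hA0 s t)
      refine ⟨A, hAne, ?_⟩
      rw [hB0, zero_smul, sub_zero]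
end

section
/- Let u, x : Fin m → K satisfy F(u) = 0 and F(x) = 0, and set y := (∇F(x)·u) • u − (∇F(u)·x) • x. Then one has the identity (∇F(y)·u) • u − (∇F(u)·y) • y = −((∇F(u)·x)^3) • x. In particular, if ∇F(u)·x ≠ 0 then applying the map x ↦ y(u,x) twice returns a nonzero scalar multiple of x. (Corollary 3.6(c) of the paper: τ_u restricts to a biregular involution of X ∖ S_u, where S_u = 𝕋_{[u]}X ∩ X.) -/
open MvPolynomial Finset

namespace TauAux

variable {K : Type*} [CommRing K] {m : ℕ}

lemma degree_univ (d : Fin m →₀ ℕ) : Finsupp.degree d = ∑ i, d i := by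
  rw [Finsupp.degree]
  exact Finset.sum_subset (Finset.subset_univ _) (by
    intro i _ hi
    simpa [Finsupp.mem_support_iff] using hi)

lemma homog_induction {n : ℕ} {P : MvPolynomial (Fin m) K → Prop}
    (h0 : P 0) (hadd : ∀ p q, P p → P q → P (p + q))
    (hmono : ∀ (d : Fin m →₀ ℕ) (c : K), Finsupp.degree d = n → P (monomial d c))
    {p : MvPolynomial (Fin m) K} (hp : p.IsHomogeneous n) : P p := by
  have h2 : P (∑ d ∈ p.support, monomial d (coeff d p)) := by
    apply Finset.sum_induction _ P hadd h0
    intro d hd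
    refine hmono d _ ?_
    have := hp (MvPolynomial.mem_support_iff.mp hd)
    rw [Finsupp.degree_eq_weight_one]
    exact this
  rwa [← p.as_sum] at h2

lemma eval_mono (v : Fin m → K) (d : Fin m →₀ ℕ) (c : K) :
    eval v (monomial d c) = c * ∏ i, v i ^ d i := by
  rw [eval_monomial, Finsupp.prod_pow]

lemma prod_single_pow (v : Fin m → K) (i : Fin m) :
    ∏ k, v k ^ (Finsupp.single i 1 : Fin m →₀ ℕ) k = v i := by
  simp [Finsupp.single_apply, pow_ite]

lemma prod_sub_single (v : Fin m → K) (d : Fin m →₀ ℕ) (i : Fin m) (hi : d i ≠ 0) :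
    (∏ k, v k ^ (d - Finsupp.single i 1 : Fin m →₀ ℕ) k) * v i = ∏ k, v k ^ d k := by
  have hle : Finsupp.single i 1 ≤ d := by
    rw [Finsupp.single_le_iff]; omega
  have hd : d - Finsupp.single i 1 + Finsupp.single i 1 = d := tsub_add_cancel_of_le hle
  conv_rhs => rw [← hd]
  rw [← prod_single_pow v i]
  rw [← Finset.prod_mul_distrib]
  exact Finset.prod_congr rfl fun k _ => by rw [Finsupp.add_apply, pow_add]

lemma euler_mono (v : Fin m → K) (d : Fin m →₀ ℕ) (c : K) (i : Fin m) :
    eval v (pderiv i (monomial d c)) * v i = (d i : K) * eval v (monomial d c) := by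
  rw [pderiv_monomial, eval_mono, eval_mono]
  by_cases hi : d i = 0
  · simp [hi]
  · rw [mul_assoc, prod_sub_single v d i hi]; ring

/-- Euler's identity. -/
lemma euler {n : ℕ} {p : MvPolynomial (Fin m) K} (hp : p.IsHomogeneous n) (v : Fin m → K) :
    ∑ i, eval v (pderiv i p) * v i = (n : K) * eval v p := by
  refine homog_induction (P := fun p => ∑ i, eval v (pderiv i p) * v i = (n : K) * eval v p) ?_ ?_ ?_ hp
  · simp
  · intro p q hp hq
    simp only [map_add, add_mul, Finset.sum_add_distrib, hp, hq, mul_add]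
  · intro d c hd
    have : ∀ i, eval v (pderiv i (monomial d c)) * v i = (d i : K) * eval v (monomial d c) :=
      euler_mono v d c
    rw [Finset.sum_congr rfl fun i _ => this i, ← Finset.sum_mul, ← Nat.cast_sum, ← degree_univ,
      hd]

/-- Scaling for homogeneous polynomials. -/
lemma eval_smul {n : ℕ} {p : MvPolynomial (Fin m) K} (hp : p.IsHomogeneous n) (s : K)
    (v : Fin m → K) : eval (s • v) p = s ^ n * eval v p := by
  refine homog_induction (P := fun p => eval (s • v) p = s ^ n * eval v p) ?_ ?_ ?_ hp
  · simp
  · intro p q hp hq; simp only [map_add, hp, hq, mul_add]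
  · intro d c hd
    rw [eval_mono, eval_mono]
    have : ∀ i, (s • v) i ^ d i = s ^ d i * v i ^ d i := fun i => by
      simp [mul_pow]
    rw [Finset.prod_congr rfl fun i _ => this i, Finset.prod_mul_distrib,
      Finset.prod_pow_eq_pow_sum, ← degree_univ, hd]
    ring

lemma degree_add (a b : Fin m →₀ ℕ) :
    Finsupp.degree (a + b) = Finsupp.degree a + Finsupp.degree b := by
  simp [degree_univ, Finset.sum_add_distrib]

lemma degree_single (i : Fin m) (k : ℕ) : Finsupp.degree (Finsupp.single i k) = k := by
  simp [degree_univ, Finsupp.single_apply]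

lemma pderiv_homog {n : ℕ} {p : MvPolynomial (Fin m) K} (hp : p.IsHomogeneous (n + 1))
    (i : Fin m) : (pderiv i p).IsHomogeneous n := by
  refine homog_induction (P := fun p => (pderiv i p).IsHomogeneous n) ?_ ?_ ?_ hp
  · simp only [map_zero]; exact isHomogeneous_zero _ _ _
  · intro p q hp hq; rw [map_add]; exact hp.add hq
  · intro d c hd
    rw [pderiv_monomial]
    by_cases hi : d i = 0
    · simp only [hi, Nat.cast_zero, mul_zero, monomial_zero]
      exact isHomogeneous_zero _ _ _
    · apply isHomogeneous_monomial
      have hle : Finsupp.single i 1 ≤ d := by rw [Finsupp.single_le_iff]; omega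
      have hdd : d - Finsupp.single i 1 + Finsupp.single i 1 = d := tsub_add_cancel_of_le hle
      have := congrArg Finsupp.degree hdd
      rw [degree_add, degree_single, hd] at this
      omega

lemma pderiv_pderiv (i j : Fin m) (p : MvPolynomial (Fin m) K) :
    pderiv i (pderiv j p) = pderiv j (pderiv i p) := by
  induction p using MvPolynomial.induction_on' with
  | monomial d c =>
    by_cases hij : i = j
    · rw [hij]
    · rw [pderiv_monomial, pderiv_monomial, pderiv_monomial, pderiv_monomial]
      have hji : ¬ j = i := fun h => hij h.symm
      have h1 : (d - Finsupp.single j 1 : Fin m →₀ ℕ) i = d i := by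
        simp [Finsupp.tsub_apply, Finsupp.single_apply, hji]
      have h2 : (d - Finsupp.single i 1 : Fin m →₀ ℕ) j = d j := by
        simp [Finsupp.tsub_apply, Finsupp.single_apply, hij]
      have h3 : d - Finsupp.single j 1 - Finsupp.single i 1
          = d - Finsupp.single i 1 - Finsupp.single j 1 := by
        rw [tsub_tsub, tsub_tsub, add_comm]
      rw [h1, h2, h3, mul_right_comm]
  | add p q hp hq => simp [hp, hq]

/-- Step extraction for degree classification. -/
lemma degree_succ_step (d : Fin m →₀ ℕ) {n : ℕ} (hd : Finsupp.degree d = n + 1) :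
    ∃ i e, d = Finsupp.single i 1 + e ∧ Finsupp.degree e = n := by
  have hne : d ≠ 0 := by
    intro h; rw [h, map_zero] at hd; omega
  obtain ⟨i, hi⟩ : ∃ i, d i ≠ 0 := by
    by_contra h; push_neg at h; exact hne (Finsupp.ext fun i => h i)
  have hle : Finsupp.single i 1 ≤ d := by rw [Finsupp.single_le_iff]; omega
  refine ⟨i, d - Finsupp.single i 1, ?_, ?_⟩
  · rw [add_tsub_cancel_of_le hle]
  · have hdd : Finsupp.single i 1 + (d - Finsupp.single i 1) = d := add_tsub_cancel_of_le hle
    have := congrArg Finsupp.degree hdd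
    rw [degree_add, degree_single, hd] at this
    omega

lemma deg2_class (d : Fin m →₀ ℕ) (hd : Finsupp.degree d = 2) :
    ∃ i j, d = Finsupp.single i 1 + Finsupp.single j 1 := by
  obtain ⟨i, e, rfl, he⟩ := degree_succ_step d hd
  obtain ⟨j, f, rfl, hf⟩ := degree_succ_step e he
  have : f = 0 := by rwa [Finsupp.degree_eq_zero_iff] at hf
  exact ⟨i, j, by rw [this, add_zero]⟩

lemma add2_mono (a b : Fin m → K) (c : K) (i j : Fin m) :
    eval (a + b) (C c * X i * X j) =
      eval a (C c * X i * X j) +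
        (∑ k, eval a (pderiv k (C c * X i * X j)) * b k) + eval b (C c * X i * X j) := by
  have hsum : ∀ k : Fin m, eval a (pderiv k (C c * X i * X j)) * b k
      = (if i = k then c * a j * b k else 0) + (if j = k then c * a i * b k else 0) := by
    intro k
    rw [mul_assoc, pderiv_C_mul, pderiv_mul, pderiv_X, pderiv_X]
    by_cases h1 : i = k <;> by_cases h2 : j = k <;>
      simp [Pi.single_apply, h1, h2] <;> ring
  rw [Finset.sum_congr rfl fun k _ => hsum k, Finset.sum_add_distrib,
    Finset.sum_ite_eq, Finset.sum_ite_eq]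
  simp only [Finset.mem_univ, if_true, eval_mul, eval_C, eval_X, Pi.add_apply]
  ring

/-- Polarization for quadratics. -/
lemma add2 {p : MvPolynomial (Fin m) K} (hp : p.IsHomogeneous 2) (a b : Fin m → K) :
    eval (a + b) p = eval a p + (∑ j, eval a (pderiv j p) * b j) + eval b p := by
  refine homog_induction (P := fun p => eval (a + b) p
      = eval a p + (∑ j, eval a (pderiv j p) * b j) + eval b p) ?_ ?_ ?_ hp
  · simp
  · intro p q hp hq
    simp only [map_add, add_mul, Finset.sum_add_distrib, hp, hq]; ring
  · intro d c hd
    obtain ⟨i, j, rfl⟩ := deg2_class d hd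
    have hm : (monomial (Finsupp.single i 1 + Finsupp.single j 1) c : MvPolynomial (Fin m) K)
        = C c * X i * X j := by
      rw [mul_assoc, X, X, monomial_mul, C_mul_monomial, one_mul, mul_one]
    rw [hm]
    exact add2_mono a b c i j

end TauAux

/-- `τ_u` is an involution off the hyperplane section `S_u`: with
`y := (∇F(x)·u) • u − (∇F(u)·x) • x` one has
`(∇F(y)·u) • u − (∇F(u)·y) • y = −((∇F(u)·x)^3) • x`; in particular, if `∇F(u)·x ≠ 0`
then applying `x ↦ y(u,x)` twice returns a nonzero scalar multiple of `x`. -/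
theorem tau_u_involution {K : Type*} [Field K] [CharZero K] {m : ℕ} (hm : 1 ≤ m)
    (F : MvPolynomial (Fin m) K) (hF : F.IsHomogeneous 3)
    (u x y : Fin m → K)
    (hu : MvPolynomial.eval u F = 0) (hx : MvPolynomial.eval x F = 0)
    (hy : y = (∑ i, MvPolynomial.eval x (MvPolynomial.pderiv i F) * u i) • u -
        (∑ i, MvPolynomial.eval u (MvPolynomial.pderiv i F) * x i) • x) :
    (∑ i, MvPolynomial.eval y (MvPolynomial.pderiv i F) * u i) • u -
        (∑ i, MvPolynomial.eval u (MvPolynomial.pderiv i F) * y i) • y =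
      (-((∑ i, MvPolynomial.eval u (MvPolynomial.pderiv i F) * x i) ^ 3)) • x ∧
    ((∑ i, MvPolynomial.eval u (MvPolynomial.pderiv i F) * x i) ≠ 0 →
      ∃ c : K, c ≠ 0 ∧
        (∑ i, MvPolynomial.eval y (MvPolynomial.pderiv i F) * u i) • u -
          (∑ i, MvPolynomial.eval u (MvPolynomial.pderiv i F) * y i) • y = c • x) := by
  open TauAux MvPolynomial in
  set P : K := ∑ i, eval u (pderiv i F) * x i with hP
  set Q : K := ∑ i, eval x (pderiv i F) * u i with hQ
  have hd2 : ∀ i, (pderiv i F).IsHomogeneous 2 := fun i => pderiv_homog hF i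
  have hd1 : ∀ i j, (pderiv j (pderiv i F)).IsHomogeneous 1 := fun i j =>
    pderiv_homog (hd2 i) j
  have hEu : ∑ i, eval u (pderiv i F) * u i = 0 := by
    rw [euler hF u, hu, mul_zero]
  -- B(u, y) = -P^2
  have hBuy : ∑ i, eval u (pderiv i F) * y i = -P ^ 2 := by
    rw [hy]
    have : ∀ i, eval u (pderiv i F) * (Q • u - P • x) i
        = Q * (eval u (pderiv i F) * u i) - P * (eval u (pderiv i F) * x i) := by
      intro i; simp [Pi.sub_apply]; ring
    rw [Finset.sum_congr rfl fun i _ => this i, Finset.sum_sub_distrib, ← Finset.mul_sum,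
      ← Finset.mul_sum, hEu, ← hP]
    ring
  -- eval y (∂ᵢ F) expansion
  have heval_y : ∀ i, eval y (pderiv i F) =
      Q ^ 2 * eval u (pderiv i F)
        - Q * P * (∑ j, eval u (pderiv j (pderiv i F)) * x j)
        + P ^ 2 * eval x (pderiv i F) := by
    intro i
    have hy' : y = Q • u + (-P) • x := by rw [hy]; module
    rw [hy', add2 (hd2 i) (Q • u) ((-P) • x), eval_smul (hd2 i), eval_smul (hd2 i)]
    have hcross : ∑ j, eval (Q • u) (pderiv j (pderiv i F)) * ((-P) • x) j
        = -(Q * P) * ∑ j, eval u (pderiv j (pderiv i F)) * x j := by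
      rw [Finset.mul_sum]
      refine Finset.sum_congr rfl fun j _ => ?_
      rw [eval_smul (hd1 i j)]
      simp; ring
    rw [hcross]
    ring
  -- the double sum
  have hS : ∑ i, (∑ j, eval u (pderiv j (pderiv i F)) * x j) * u i = 2 * P := by
    have h1 : ∀ i, (∑ j, eval u (pderiv j (pderiv i F)) * x j) * u i
        = ∑ j, eval u (pderiv j (pderiv i F)) * x j * u i := by
      intro i; rw [Finset.sum_mul]
    rw [Finset.sum_congr rfl fun i _ => h1 i, Finset.sum_comm]
    have h2 : ∀ j, ∑ i, eval u (pderiv j (pderiv i F)) * x j * u i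
        = x j * (2 * eval u (pderiv j F)) := by
      intro j
      have h3 : ∀ i, eval u (pderiv j (pderiv i F)) * x j * u i
          = x j * (eval u (pderiv i (pderiv j F)) * u i) := by
        intro i; rw [pderiv_pderiv]; ring
      rw [Finset.sum_congr rfl fun i _ => h3 i, ← Finset.mul_sum, euler (hd2 j) u]
      norm_num
    rw [Finset.sum_congr rfl fun j _ => h2 j, hP, Finset.mul_sum]
    exact Finset.sum_congr rfl fun j _ => by ring
  have hByu : ∑ i, eval y (pderiv i F) * u i = -(P ^ 2) * Q := by
    rw [Finset.sum_congr rfl fun i _ => by rw [heval_y i]]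
    simp only [sub_mul, add_mul, Finset.sum_sub_distrib, Finset.sum_add_distrib, mul_assoc,
      ← Finset.mul_sum]
    rw [hEu, hS, ← hQ]
    ring
  have key : (∑ i, eval y (pderiv i F) * u i) • u - (∑ i, eval u (pderiv i F) * y i) • y
      = (-(P ^ 3)) • x := by
    rw [hByu, hBuy, hy]
    module
  refine ⟨key, fun hPne => ⟨-(P ^ 3), ?_, key⟩⟩
  simpa using pow_ne_zero 3 hPne
end
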